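/- Let φ be an endomorphism of a group G, let H be a normal φ-invariant subgroup of G, let φ' : H → H be the restriction of φ to H, and let φ̄ : G/H → G/H be the induced endomorphism. If the fixed-point subgroup C(φ̄) = {x ∈ G/H : φ̄(x) = x} has exactly n elements (n finite), then R(φ') ≤ R(φ) · n. -/

import Mathlib

/-- The twisted-conjugacy relation of an endomorphism `φ`. -/
def twistedConjRel {G : Type*} [Group G] (φ : G →* G) (x y : G) : Prop :=
  ∃ g : G, y = g * x * (φ g)⁻¹

/-- The set of Reidemeister classes of `φ`. -/
def ReidClasses (G : Type*) [Group G] (φ : G →* G) : Type _ :=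
  Quot (twistedConjRel φ)

theorem twistedConjRel_equiv {G : Type*} [Group G] (φ : G →* G) :
    Equivalence (twistedConjRel φ) := by
  constructor
  · intro x; exact ⟨1, by simp⟩
  · rintro x y ⟨g, rfl⟩
    exact ⟨g⁻¹, by simp [mul_assoc]⟩
  · rintro x y z ⟨g, rfl⟩ ⟨g', rfl⟩
    exact ⟨g' * g, by simp [mul_assoc]⟩

theorem twistedConj_quot_eq {G : Type*} [Group G] (φ : G →* G) (x y : G) :
    Quot.mk (twistedConjRel φ) x = Quot.mk (twistedConjRel φ) y ↔ twistedConjRel φ x y := by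
  rw [Quot.eq]
  exact (twistedConjRel_equiv φ).eqvGen_iff

/-- If `H` is a normal `φ`-invariant subgroup, `φ'` the restriction of `φ` to `H`,
`φ̄` the induced endomorphism of `G ⧸ H`, and the fixed-point subgroup of `φ̄` has
exactly `n` elements, then `R(φ') ≤ R(φ) * n`. -/
theorem reidemeister_restriction_le
    {G : Type*} [Group G] (φ : G →* G) (H : Subgroup G) [H.Normal]
    (hinv : ∀ h ∈ H, φ h ∈ H)
    (φ' : H →* H) (hφ' : ∀ h : H, (φ' h : G) = φ (h : G))
    (φbar : G ⧸ H →* G ⧸ H)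
    (hφbar : ∀ g : G, φbar (QuotientGroup.mk g) = QuotientGroup.mk (φ g))
    (n : ℕ) (hfin : Finite {x : G ⧸ H // φbar x = x})
    (hn : Nat.card {x : G ⧸ H // φbar x = x} = n) :
    Cardinal.mk (ReidClasses ↥H φ') ≤ Cardinal.mk (ReidClasses G φ) * n := by
  classical
  -- key membership fact
  have mem_key : ∀ (g : G) (h₀ : H), (QuotientGroup.mk (φ g) : G ⧸ H) = QuotientGroup.mk g →
      g * (h₀ : G) * (φ g)⁻¹ ∈ H := by
    intro g h₀ hx
    have : g⁻¹ * φ g ∈ H := QuotientGroup.eq.mp hx.symm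
    have h2 : (h₀ : G) * (g⁻¹ * φ g)⁻¹ ∈ H := H.mul_mem h₀.2 (H.inv_mem this)
    have h3 : g * ((h₀ : G) * (g⁻¹ * φ g)⁻¹) * g⁻¹ ∈ H :=
      Subgroup.Normal.conj_mem ‹H.Normal› _ h2 g
    have : g * ((h₀ : G) * (g⁻¹ * φ g)⁻¹) * g⁻¹ = g * (h₀ : G) * (φ g)⁻¹ := by
      group
    rwa [this] at h3
  -- the function
  let f : ReidClasses G φ × {x : G ⧸ H // φbar x = x} → ReidClasses ↥H φ' := fun p =>
    if hc : ∃ h : H, Quot.mk (twistedConjRel φ) (h : G) = p.1 then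
      let h₀ := hc.choose
      let g := Quotient.out p.2.1
      have hxg : (QuotientGroup.mk g : G ⧸ H) = p.2.1 := Quotient.out_eq _
      have hfix : (QuotientGroup.mk (φ g) : G ⧸ H) = QuotientGroup.mk g := by
        rw [← hφbar, hxg]; exact p.2.2
      Quot.mk (twistedConjRel φ') ⟨g * (h₀ : G) * (φ g)⁻¹, mem_key g h₀ hfix⟩
    else Quot.mk (twistedConjRel φ') 1
  have hsurj : Function.Surjective f := by
    intro q
    obtain ⟨h, rfl⟩ := Quot.exists_rep q
    set c : ReidClasses G φ := Quot.mk (twistedConjRel φ) (h : G) with hc_def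
    have hc : ∃ h' : H, Quot.mk (twistedConjRel φ) (h' : G) = c := ⟨h, rfl⟩
    set h₀ := hc.choose with hh₀
    have hspec : Quot.mk (twistedConjRel φ) (h₀ : G) = c := hc.choose_spec
    rw [hc_def, twistedConj_quot_eq] at hspec
    obtain ⟨g, hg⟩ := hspec
    -- g h₀ φ(g)⁻¹ = h, so ḡ is a fixed point of φbar
    set x : G ⧸ H := QuotientGroup.mk g with hx_def
    have hfixg : (QuotientGroup.mk (φ g) : G ⧸ H) = QuotientGroup.mk g := by
      have h1 : (QuotientGroup.mk (h : G) : G ⧸ H) = 1 := (QuotientGroup.eq_one_iff _).2 h.2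
      have h0 : (QuotientGroup.mk (h₀ : G) : G ⧸ H) = 1 := (QuotientGroup.eq_one_iff _).2 h₀.2
      have := congrArg (QuotientGroup.mk (s := H)) hg
      simp only [QuotientGroup.mk_mul, QuotientGroup.mk_inv, h1, h0, mul_one, one_mul] at this
      exact (mul_inv_eq_one.mp this.symm).symm
    have hxfix : φbar x = x := by rw [hx_def, hφbar, hfixg]
    refine ⟨⟨c, ⟨x, hxfix⟩⟩, ?_⟩
    simp only [f]
    erw [dif_pos hc]
    set g' := Quotient.out x with hg'
    have hxg' : (QuotientGroup.mk g' : G ⧸ H) = x := Quotient.out_eq _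
    -- g' = g * k with k ∈ H
    have hk : g⁻¹ * g' ∈ H := by
      rw [← QuotientGroup.eq]
      rw [hxg', hx_def]
    erw [twistedConj_quot_eq]
    -- witness m = g' * (g'⁻¹ * g) * g'⁻¹ = g * g'⁻¹
    have hm : g * g'⁻¹ ∈ H := by
      have := H.inv_mem hk
      have h3 : g' * (g'⁻¹ * g) * g'⁻¹ ∈ H := Subgroup.Normal.conj_mem ‹H.Normal› _
        (by simpa using this) g'
      simpa [mul_assoc] using h3
    refine ⟨⟨g * g'⁻¹, hm⟩, ?_⟩
    apply Subtype.ext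
    push_cast [hφ']
    rw [hg]
    simp only [map_mul, map_inv]
    rw [← hg', ← hh₀]
    group
  calc Cardinal.mk (ReidClasses ↥H φ')
      ≤ Cardinal.mk (ReidClasses G φ × {x : G ⧸ H // φbar x = x}) :=
        Cardinal.mk_le_of_surjective hsurj
    _ = Cardinal.mk (ReidClasses G φ) * Cardinal.mk {x : G ⧸ H // φbar x = x} :=
        by rw [Cardinal.mk_prod, Cardinal.lift_id, Cardinal.lift_id]
    _ = Cardinal.mk (ReidClasses G φ) * n := by
        congr 1
        rw [← hn, Nat.card]
        exact (Cardinal.cast_toNat_of_lt_aleph0 (Cardinal.lt_aleph0_of_finite _)).symm
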